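/- Let (Ω, Σ, μ) be a σ-finite complete measure space, let 1 ≤ p < ∞, and let T : Ω → Ω be a non-singular measurable transformation. Then the composition operator C_T, defined on pairs by C_T(f₁, f₂) = (f₁ ∘ T, f₂ ∘ T), maps L^p(𝔹ℂ) boundedly into itself (i.e. there exists C > 0 such that for every f = (f₁, f₂) with f₁, f₂ ∈ L^p(μ), both fᵢ ∘ T ∈ L^p(μ) and ‖C_T f‖_{p,𝔹ℂ} ≤ C·‖f‖_{p,𝔹ℂ}) if and only if there exists M > 0 such that μ(T⁻¹(A)) ≤ M·μ(A) for all A ∈ Σ with μ(A) < ∞. -/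

import Mathlib

noncomputable section

open MeasureTheory
open scoped ENNReal NNReal

/-- The bicomplex `L^p` norm of a pair:
`‖(f₁, f₂)‖_{p,𝔹ℂ} = (1/√2)(‖f₁‖_p² + ‖f₂‖_p²)^{1/2}`. -/
def bcLpNorm {Ω : Type*} [MeasurableSpace Ω] (μ : Measure Ω) (p : ℝ≥0∞)
    (f : (Ω → ℂ) × (Ω → ℂ)) : ℝ :=
  (1 / Real.sqrt 2) *
    Real.sqrt ((eLpNorm f.1 p μ).toReal ^ 2 + (eLpNorm f.2 p μ).toReal ^ 2)

/-- Non-singularity extends to arbitrary null sets. -/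
lemma aux_null {Ω : Type*} [MeasurableSpace Ω] {μ : Measure Ω} {T : Ω → Ω}
    (hns : ∀ A : Set Ω, MeasurableSet A → μ A = 0 → μ (T ⁻¹' A) = 0)
    {s : Set Ω} (hs : μ s = 0) : μ (T ⁻¹' s) = 0 := by
  have h1 : μ (toMeasurable μ s) = 0 := by rwa [measure_toMeasurable]
  have h2 := hns _ (measurableSet_toMeasurable μ s) h1
  exact measure_mono_null (Set.preimage_mono (subset_toMeasurable μ s)) h2

/-- a.e. equality is preserved by composing with a non-singular map. -/
lemma aux_ae_comp {Ω : Type*} [MeasurableSpace Ω] {μ : Measure Ω} {T : Ω → Ω}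
    (hns : ∀ A : Set Ω, MeasurableSet A → μ A = 0 → μ (T ⁻¹' A) = 0)
    {f g : Ω → ℂ} (hfg : f =ᵐ[μ] g) : (f ∘ T) =ᵐ[μ] (g ∘ T) := by
  have h0 : μ {x | ¬ f x = g x} = 0 := MeasureTheory.ae_iff.mp hfg
  rw [Filter.EventuallyEq, MeasureTheory.ae_iff]
  exact measure_mono_null (fun x hx => hx) (aux_null hns h0)

/-- Composition with `T` preserves a.e. strong measurability. -/
lemma aux_aesm {Ω : Type*} [MeasurableSpace Ω] {μ : Measure Ω} {T : Ω → Ω}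
    (hTm : Measurable T)
    (hns : ∀ A : Set Ω, MeasurableSet A → μ A = 0 → μ (T ⁻¹' A) = 0)
    {f : Ω → ℂ} (hf : AEStronglyMeasurable f μ) :
    AEStronglyMeasurable (f ∘ T) μ := by
  obtain ⟨g, hg, hfg⟩ := hf
  exact ⟨g ∘ T, hg.comp_measurable hTm, aux_ae_comp hns hfg⟩

/-- The pushforward bound on all measurable sets (via σ-finiteness). -/
lemma aux_map_le {Ω : Type*} [MeasurableSpace Ω] (μ : Measure Ω) [SigmaFinite μ]
    {T : Ω → Ω} (hTm : Measurable T) {M : ℝ≥0}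
    (hM : ∀ A : Set Ω, MeasurableSet A → μ A < ⊤ → μ (T ⁻¹' A) ≤ (M : ℝ≥0∞) * μ A) :
    μ.map T ≤ (M : ℝ≥0∞) • μ := by
  rw [Measure.le_iff]
  intro A hA
  rw [Measure.map_apply hTm hA, Measure.smul_apply, smul_eq_mul]
  have hcover : A = ⋃ n, A ∩ spanningSets μ n := by
    rw [← Set.inter_iUnion, iUnion_spanningSets, Set.inter_univ]
  have hmono : Monotone fun n => A ∩ spanningSets μ n :=
    fun i j hij => Set.inter_subset_inter_right A (monotone_spanningSets μ hij)
  have h1 : μ (T ⁻¹' A) = ⨆ n, μ (T ⁻¹' (A ∩ spanningSets μ n)) := by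
    conv_lhs => rw [hcover, Set.preimage_iUnion]
    exact Directed.measure_iUnion fun i j => ⟨max i j,
      Set.preimage_mono (hmono (le_max_left i j)),
      Set.preimage_mono (hmono (le_max_right i j))⟩
  have h2 : μ A = ⨆ n, μ (A ∩ spanningSets μ n) := by
    conv_lhs => rw [hcover]
    exact Directed.measure_iUnion fun i j => ⟨max i j,
      hmono (le_max_left i j), hmono (le_max_right i j)⟩
  rw [h1, h2, ENNReal.mul_iSup]
  refine iSup_mono fun n => ?_
  exact hM _ (hA.inter (measurableSet_spanningSets μ n))
    (lt_of_le_of_lt (measure_mono Set.inter_subset_right) (measure_spanningSets_lt_top μ n))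

/-- Norm bound for the composition. -/
lemma aux_eLpNorm_comp {Ω : Type*} [MeasurableSpace Ω] {μ : Measure Ω} [SigmaFinite μ]
    {p : ℝ≥0∞} (hp' : p ≠ ⊤) {T : Ω → Ω} (hTm : Measurable T)
    (hns : ∀ A : Set Ω, MeasurableSet A → μ A = 0 → μ (T ⁻¹' A) = 0)
    {M : ℝ≥0}
    (hM : ∀ A : Set Ω, MeasurableSet A → μ A < ⊤ → μ (T ⁻¹' A) ≤ (M : ℝ≥0∞) * μ A)
    {f : Ω → ℂ} (hf : AEStronglyMeasurable f μ) :
    eLpNorm (f ∘ T) p μ ≤ (M : ℝ≥0∞) ^ (1 / p).toReal * eLpNorm f p μ := by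
  obtain ⟨g, hg, hfg⟩ := hf
  rw [eLpNorm_congr_ae (aux_ae_comp hns hfg), eLpNorm_congr_ae hfg]
  have hgm : AEStronglyMeasurable g (μ.map T) := hg.aestronglyMeasurable
  rw [← eLpNorm_map_measure hgm hTm.aemeasurable]
  calc eLpNorm g p (μ.map T) ≤ eLpNorm g p ((M : ℝ≥0∞) • μ) :=
        eLpNorm_mono_measure g (aux_map_le μ hTm hM)
    _ = (M : ℝ≥0∞) ^ (1 / p).toReal * eLpNorm g p μ := by
        rw [eLpNorm_smul_measure_of_ne_top hp', smul_eq_mul]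

/-- For a non-singular measurable transformation `T` of a σ-finite complete measure
space and `1 ≤ p < ∞`, the composition operator `C_T(f₁, f₂) = (f₁ ∘ T, f₂ ∘ T)` maps
`L^p(𝔹ℂ)` boundedly into itself iff there is `M > 0` with `μ(T⁻¹(A)) ≤ M·μ(A)` for
all `A ∈ Σ` of finite measure. -/
theorem bicomplex_Lp_composition_bounded_iff {Ω : Type*} [MeasurableSpace Ω]
    (μ : Measure Ω) [SigmaFinite μ] (hμ : μ.IsComplete)
    (p : ℝ≥0∞) (hp : 1 ≤ p) (hp' : p ≠ ⊤)
    (T : Ω → Ω) (hTm : Measurable T)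
    (hns : ∀ A : Set Ω, MeasurableSet A → μ A = 0 → μ (T ⁻¹' A) = 0) :
    (∃ C : ℝ, 0 < C ∧ ∀ f₁ f₂ : Ω → ℂ, MemLp f₁ p μ → MemLp f₂ p μ →
        MemLp (f₁ ∘ T) p μ ∧ MemLp (f₂ ∘ T) p μ ∧
          bcLpNorm μ p (f₁ ∘ T, f₂ ∘ T) ≤ C * bcLpNorm μ p (f₁, f₂)) ↔
      (∃ M : ℝ≥0, 0 < M ∧ ∀ A : Set Ω, MeasurableSet A → μ A < ⊤ →
        μ (T ⁻¹' A) ≤ (M : ℝ≥0∞) * μ A) := by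
  have hp0 : p ≠ 0 := fun h => by simp [h] at hp
  have hq0 : 0 < p.toReal := ENNReal.toReal_pos hp0 hp'
  set q := p.toReal with hq
  constructor
  · rintro ⟨C, hC, hbd⟩
    have hCq : (0:ℝ) < C ^ q := Real.rpow_pos_of_pos hC q
    refine ⟨(C ^ q).toNNReal, Real.toNNReal_pos.mpr hCq, fun A hA hAfin => ?_⟩
    set f₁ : Ω → ℂ := A.indicator (fun _ => 1) with hf₁
    have hmem₁ : MemLp f₁ p μ := memLp_indicator_const p hA 1 (Or.inr hAfin.ne)
    have hmem₂ : MemLp (0 : Ω → ℂ) p μ := MemLp.zero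
    obtain ⟨hmemT, -, hineq⟩ := hbd f₁ 0 hmem₁ hmem₂
    have hcomp : f₁ ∘ T = (T ⁻¹' A).indicator (fun _ => (1 : ℂ)) := by
      funext x
      by_cases h : T x ∈ A <;> simp [hf₁, Set.indicator, Set.mem_preimage, h]
    have he₁ : eLpNorm f₁ p μ = μ A ^ (1 / q) := by
      rw [hf₁, eLpNorm_indicator_const hA hp0 hp']
      simp [hq]
    have he₂ : eLpNorm (f₁ ∘ T) p μ = μ (T ⁻¹' A) ^ (1 / q) := by
      rw [hcomp, eLpNorm_indicator_const (hTm hA) hp0 hp']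
      simp [hq]
    -- finiteness of μ (T ⁻¹' A)
    have hfinT : μ (T ⁻¹' A) < ⊤ := by
      have h := hmemT.eLpNorm_lt_top
      rw [he₂] at h
      by_contra hcon
      push_neg at hcon
      rw [top_le_iff] at hcon
      rw [hcon, ENNReal.top_rpow_of_pos (by positivity)] at h
      exact lt_irrefl _ h
    -- from the norm inequality extract the real inequality
    have hzero : eLpNorm (0 : Ω → ℂ) p μ = 0 := eLpNorm_zero
    have hsq : ∀ a : ℝ, 0 ≤ a → Real.sqrt (a ^ 2 + 0 ^ 2) = a := by
      intro a ha
      rw [zero_pow (by norm_num), add_zero, Real.sqrt_sq ha]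
    have hbc1 : bcLpNorm μ p (f₁ ∘ T, (0 : Ω → ℂ) ∘ T) =
        (1 / Real.sqrt 2) * (eLpNorm (f₁ ∘ T) p μ).toReal := by
      have h0T : ((0 : Ω → ℂ) ∘ T) = (0 : Ω → ℂ) := rfl
      rw [bcLpNorm]
      simp only [h0T]
      rw [hzero]
      simp only [ENNReal.toReal_zero]
      rw [hsq _ ENNReal.toReal_nonneg]
    have hbc2 : bcLpNorm μ p (f₁, (0 : Ω → ℂ)) =
        (1 / Real.sqrt 2) * (eLpNorm f₁ p μ).toReal := by
      rw [bcLpNorm]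
      simp only []
      rw [hzero]
      simp only [ENNReal.toReal_zero]
      rw [hsq _ ENNReal.toReal_nonneg]
    rw [hbc1, hbc2] at hineq
    have hs2 : (0:ℝ) < 1 / Real.sqrt 2 := by positivity
    have hineq' : (eLpNorm (f₁ ∘ T) p μ).toReal ≤ C * (eLpNorm f₁ p μ).toReal := by
      nlinarith [hineq, hs2, ENNReal.toReal_nonneg (a := eLpNorm (f₁ ∘ T) p μ),
        ENNReal.toReal_nonneg (a := eLpNorm f₁ p μ)]
    rw [he₁, he₂] at hineq'
    have haT : (μ (T ⁻¹' A) ^ (1 / q)).toReal = (μ (T ⁻¹' A)).toReal ^ (1 / q) :=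
      (ENNReal.toReal_rpow _ _).symm
    have haA : (μ A ^ (1 / q)).toReal = (μ A).toReal ^ (1 / q) :=
      (ENNReal.toReal_rpow _ _).symm
    rw [haT, haA] at hineq'
    -- raise both sides to power q
    have hkey : (μ (T ⁻¹' A)).toReal ≤ C ^ q * (μ A).toReal := by
      have hL : (0:ℝ) ≤ (μ (T ⁻¹' A)).toReal ^ (1 / q) := by positivity
      have h3 : ((μ (T ⁻¹' A)).toReal ^ (1 / q)) ^ q ≤
          (C * (μ A).toReal ^ (1 / q)) ^ q :=
        Real.rpow_le_rpow hL hineq' hq0.le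
      rwa [← Real.rpow_mul ENNReal.toReal_nonneg, one_div_mul_cancel hq0.ne',
        Real.rpow_one, Real.mul_rpow hC.le (by positivity),
        ← Real.rpow_mul ENNReal.toReal_nonneg, one_div_mul_cancel hq0.ne',
        Real.rpow_one] at h3
    calc μ (T ⁻¹' A) = ENNReal.ofReal (μ (T ⁻¹' A)).toReal :=
          (ENNReal.ofReal_toReal hfinT.ne).symm
      _ ≤ ENNReal.ofReal (C ^ q * (μ A).toReal) := ENNReal.ofReal_le_ofReal hkey
      _ = ENNReal.ofReal (C ^ q) * ENNReal.ofReal (μ A).toReal :=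
          ENNReal.ofReal_mul hCq.le
      _ = ((C ^ q).toNNReal : ℝ≥0∞) * μ A := by
          rw [ENNReal.ofReal_toReal hAfin.ne]; rfl
  · rintro ⟨M, hM, hMle⟩
    set K : ℝ := (M : ℝ) ^ (1 / q) with hK
    have hKpos : 0 < K := Real.rpow_pos_of_pos (by exact_mod_cast hM) _
    refine ⟨K, hKpos, fun f₁ f₂ h₁ h₂ => ?_⟩
    have hbound : ∀ f : Ω → ℂ, MemLp f p μ →
        eLpNorm (f ∘ T) p μ ≤ (M : ℝ≥0∞) ^ (1 / p).toReal * eLpNorm f p μ :=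
      fun f hf => aux_eLpNorm_comp hp' hTm hns hMle hf.aestronglyMeasurable
    have hMfin : ((M : ℝ≥0∞) ^ (1 / p).toReal) ≠ ⊤ :=
      ENNReal.rpow_ne_top_of_nonneg (by positivity) ENNReal.coe_ne_top
    have hmemT : ∀ f : Ω → ℂ, MemLp f p μ → MemLp (f ∘ T) p μ := by
      intro f hf
      refine ⟨aux_aesm hTm hns hf.aestronglyMeasurable, ?_⟩
      exact lt_of_le_of_lt (hbound f hf)
        (ENNReal.mul_lt_top hMfin.lt_top hf.eLpNorm_lt_top)
    refine ⟨hmemT f₁ h₁, hmemT f₂ h₂, ?_⟩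
    have hKval : ((M : ℝ≥0∞) ^ (1 / p).toReal).toReal = K := by
      rw [← ENNReal.toReal_rpow]
      simp [hK, hq]
    have hreal : ∀ f : Ω → ℂ, MemLp f p μ →
        (eLpNorm (f ∘ T) p μ).toReal ≤ K * (eLpNorm f p μ).toReal := by
      intro f hf
      have h := hbound f hf
      have hfin : (M : ℝ≥0∞) ^ (1 / p).toReal * eLpNorm f p μ ≠ ⊤ :=
        ENNReal.mul_ne_top hMfin hf.eLpNorm_lt_top.ne
      calc (eLpNorm (f ∘ T) p μ).toReal
          ≤ ((M : ℝ≥0∞) ^ (1 / p).toReal * eLpNorm f p μ).toReal :=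
            ENNReal.toReal_mono hfin h
        _ = K * (eLpNorm f p μ).toReal := by rw [ENNReal.toReal_mul, hKval]
    have ha := hreal f₁ h₁
    have hb := hreal f₂ h₂
    rw [bcLpNorm, bcLpNorm]
    simp only []
    rw [mul_comm K _, mul_assoc]
    gcongr (1 / Real.sqrt 2) * ?_
    rw [mul_comm _ K, ← Real.sqrt_sq hKpos.le, ← Real.sqrt_mul (by positivity)]
    apply Real.sqrt_le_sqrt
    have h1 : (eLpNorm (f₁ ∘ T) p μ).toReal ^ 2 ≤ K ^ 2 * (eLpNorm f₁ p μ).toReal ^ 2 := by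
      nlinarith [ENNReal.toReal_nonneg (a := eLpNorm (f₁ ∘ T) p μ),
        ENNReal.toReal_nonneg (a := eLpNorm f₁ p μ)]
    have h2 : (eLpNorm (f₂ ∘ T) p μ).toReal ^ 2 ≤ K ^ 2 * (eLpNorm f₂ p μ).toReal ^ 2 := by
      nlinarith [ENNReal.toReal_nonneg (a := eLpNorm (f₂ ∘ T) p μ),
        ENNReal.toReal_nonneg (a := eLpNorm f₂ p μ)]
    linarith
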